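/- Let Ω ⊆ ℝ³ be open with coordinates (x, y, t), and let u : Ω → ℝ be a C² function with u_y > 0 and u_t > 0 on Ω satisfying the dispersionless Toda singular manifold equation u_{xy} · (e^{u_t} − 1)(1 − e^{−u_t}) = u_x u_y u_{tt} on Ω. Then ∂_x ( log( u_y / (e^{u_t} − 1) ) ) + ∂_t ( u_x e^{u_t} / (e^{u_t} − 1) ) = 0 on Ω. -/

import Mathlib

set_option maxHeartbeats 1000000

/-- Partial derivative of `f : ℝⁿ → ℝ` in the `i`-th coordinate direction. -/
noncomputable def pd {n : ℕ} (i : Fin n) (f : (Fin n → ℝ) → ℝ) (x : Fin n → ℝ) : ℝ :=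
  fderiv ℝ f x (Pi.single i 1)

/-- Every solution with `u_y > 0`, `u_t > 0` of the dispersionless Toda singular
manifold equation `u_{xy} (e^{u_t} − 1)(1 − e^{−u_t}) = u_x u_y u_{tt}` satisfies the
conservation law `(log(u_y/(e^{u_t} − 1)))_x + (u_x e^{u_t}/(e^{u_t} − 1))_t = 0`.
Coordinates on `ℝ³` are `x = 0`, `y = 1`, `t = 2`. -/
theorem dToda_conservation_law
    (Ω : Set (Fin 3 → ℝ)) (hΩ : IsOpen Ω)
    (u : (Fin 3 → ℝ) → ℝ) (hu : ContDiffOn ℝ 2 u Ω)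
    (huy : ∀ X ∈ Ω, 0 < pd 1 u X)
    (hut : ∀ X ∈ Ω, 0 < pd 2 u X)
    (heq : ∀ X ∈ Ω,
      pd 1 (pd 0 u) X * ((Real.exp (pd 2 u X) - 1) * (1 - Real.exp (-(pd 2 u X))))
        = pd 0 u X * pd 1 u X * pd 2 (pd 2 u) X) :
    ∀ X ∈ Ω,
      pd 0 (fun Y => Real.log (pd 1 u Y / (Real.exp (pd 2 u Y) - 1))) X
        + pd 2 (fun Y => pd 0 u Y * Real.exp (pd 2 u Y) / (Real.exp (pd 2 u Y) - 1)) X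
        = 0 := by
  intro X hX
  have hX2 : ContDiffAt ℝ 2 u X := hu.contDiffAt (hΩ.mem_nhds hX)
  have hf' : ContDiffAt ℝ 1 (fderiv ℝ u) X := hX2.fderiv_right (by norm_num)
  have hdf : DifferentiableAt ℝ (fderiv ℝ u) X := hf'.differentiableAt one_ne_zero
  set F := fderiv ℝ (fderiv ℝ u) X with hF
  have hsym : ∀ v w, F v w = F w v := hX2.isSymmSndFDerivAt minSmoothness_of_isRCLikeNormedField.le
  -- derivatives of the first partials
  have hpd : ∀ i : Fin 3, HasFDerivAt (pd i u)
      ((ContinuousLinearMap.apply ℝ ℝ (Pi.single i 1)).comp F) X := by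
    intro i
    exact (ContinuousLinearMap.apply ℝ ℝ (Pi.single i 1)).hasFDerivAt.comp X hdf.hasFDerivAt
  set e0 : Fin 3 → ℝ := Pi.single 0 1
  set e1 : Fin 3 → ℝ := Pi.single 1 1
  set e2 : Fin 3 → ℝ := Pi.single 2 1
  set A := pd 0 u X
  set B := pd 1 u X
  set C := pd 2 u X
  have hBpos : 0 < B := huy X hX
  have hCpos : 0 < C := hut X hX
  set q : ℝ := Real.exp C - 1 with hq
  have hqpos : 0 < q := by
    have : (1 : ℝ) < Real.exp C := by
      have := Real.add_one_lt_exp (ne_of_gt hCpos)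
      linarith
    simp [hq]; linarith
  have hq0 : q ≠ 0 := ne_of_gt hqpos
  have hB0 : B ≠ 0 := ne_of_gt hBpos
  -- derivative of the denominator Y ↦ exp(u_t) - 1
  have hc := hpd 2
  have hqd : HasFDerivAt (fun Y => Real.exp (pd 2 u Y) - 1)
      (Real.exp C • ((ContinuousLinearMap.apply ℝ ℝ e2).comp F)) X := hc.exp.sub_const 1
  have hqinv : HasFDerivAt (fun Y => (Real.exp (pd 2 u Y) - 1)⁻¹)
      ((-(q ^ 2)⁻¹) • (Real.exp C • ((ContinuousLinearMap.apply ℝ ℝ e2).comp F))) X := by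
    have := (hasDerivAt_inv hq0).comp_hasFDerivAt X hqd
    exact this
  -- first summand
  have hmul1 := (hpd 1).mul hqinv
  have hlogpos : B * q⁻¹ ≠ 0 := by positivity
  have hlog := hmul1.log hlogpos
  have hval1 : pd 0 (fun Y => Real.log (pd 1 u Y / (Real.exp (pd 2 u Y) - 1))) X
      = (B * q⁻¹)⁻¹ * (B * (-(q ^ 2)⁻¹ * (Real.exp C * F e0 e2)) + q⁻¹ * F e0 e1) := by
    have : pd 0 (fun Y => Real.log (pd 1 u Y / (Real.exp (pd 2 u Y) - 1))) X
        = pd 0 (fun Y => Real.log (pd 1 u Y * (Real.exp (pd 2 u Y) - 1)⁻¹)) X := by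
      simp [div_eq_mul_inv]
    rw [this, pd, (show HasFDerivAt (fun Y => Real.log (pd 1 u Y * (Real.exp (pd 2 u Y) - 1)⁻¹)) _ X from hlog).fderiv]
    simp [ContinuousLinearMap.smul_apply, ContinuousLinearMap.add_apply,
      ContinuousLinearMap.comp_apply, ContinuousLinearMap.apply_apply, smul_eq_mul]
    ring
  -- second summand
  have hnum := (hpd 0).mul (hpd 2).exp
  have hmul2 := hnum.mul hqinv
  have hval2 : pd 2 (fun Y => pd 0 u Y * Real.exp (pd 2 u Y) / (Real.exp (pd 2 u Y) - 1)) X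
      = (A * (Real.exp C * F e2 e2) + Real.exp C * F e2 e0) * q⁻¹
        + (A * Real.exp C) * (-(q ^ 2)⁻¹ * (Real.exp C * F e2 e2)) := by
    have : pd 2 (fun Y => pd 0 u Y * Real.exp (pd 2 u Y) / (Real.exp (pd 2 u Y) - 1)) X
        = pd 2 (fun Y => (pd 0 u Y * Real.exp (pd 2 u Y)) * (Real.exp (pd 2 u Y) - 1)⁻¹) X := by
      simp [div_eq_mul_inv]
    rw [this, pd, (show HasFDerivAt (fun Y => (pd 0 u Y * Real.exp (pd 2 u Y)) * (Real.exp (pd 2 u Y) - 1)⁻¹) _ X from hmul2).fderiv]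
    simp [ContinuousLinearMap.smul_apply, ContinuousLinearMap.add_apply,
      ContinuousLinearMap.comp_apply, ContinuousLinearMap.apply_apply, smul_eq_mul]
    ring
  -- PDE at X in terms of F
  have hE := heq X hX
  have h10 : pd 1 (pd 0 u) X = F e1 e0 := by
    rw [pd, (hpd 0).fderiv]
    simp [ContinuousLinearMap.comp_apply, ContinuousLinearMap.apply_apply, hsym e1 e0]
    exact hsym _ _
  have h22 : pd 2 (pd 2 u) X = F e2 e2 := by
    rw [pd, (hpd 2).fderiv]
    simp [ContinuousLinearMap.comp_apply, ContinuousLinearMap.apply_apply]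
    rfl
  rw [h10, h22] at hE
  have hexpC : Real.exp (-C) = (Real.exp C)⁻¹ := Real.exp_neg C
  rw [hexpC] at hE
  have hexp0 : Real.exp C ≠ 0 := (Real.exp_pos C).ne'
  have hsym01 : F e0 e1 = F e1 e0 := hsym e0 e1
  have hsym02 : F e0 e2 = F e2 e0 := hsym e0 e2
  have key : F e1 e0 * q ^ 2 = A * B * F e2 e2 * Real.exp C := by
    have h2 : (1 : ℝ) - (Real.exp C)⁻¹ = q / Real.exp C := by
      rw [hq]; field_simp
    rw [h2] at hE
    field_simp at hE
    linear_combination hE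
  have keyE : F e1 e0 * (Real.exp C - 1) ^ 2 = A * B * F e2 e2 * Real.exp C := by
    rw [hq] at key; exact key
  rw [hval1, hval2, hsym01, hsym02, hq]
  field_simp [show Real.exp C - 1 ≠ 0 from hq0]
  linear_combination keyE
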